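/- For each integer N ≥ 4, the smaller root w₁(N) = 2(15 - 12N + 3N² - 2√(48 - 64N + 32N² - 8N³ + N⁴)) / (3(3 - 4N + N²)) of the equation u*(N,w) = 2/9 is a well-defined real number, and w₁(N) converges to 2/3 from below as N → ∞. -/

import Mathlib

/-- The smaller root `w₁(N)` of the equation `u*(N,w) = 2/9`. -/
noncomputable def w1 (N : ℕ) : ℝ :=
  2 * (15 - 12 * (N : ℝ) + 3 * (N : ℝ) ^ 2 -
      2 * Real.sqrt (48 - 64 * (N : ℝ) + 32 * (N : ℝ) ^ 2 - 8 * (N : ℝ) ^ 3 + (N : ℝ) ^ 4)) /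
    (3 * (3 - 4 * (N : ℝ) + (N : ℝ) ^ 2))

lemma w1_bounds (N : ℕ) (hN : 4 ≤ N) :
    2 * ((N : ℝ) ^ 2 - 4 * N - 1) / (3 * ((N : ℝ) ^ 2 - 4 * N + 3)) < w1 N ∧ w1 N < 2/3 := by
  have hx : (4 : ℝ) ≤ (N : ℝ) := by exact_mod_cast hN
  set x : ℝ := (N : ℝ) with hxdef
  have hR : (0 : ℝ) ≤ 48 - 64 * x + 32 * x ^ 2 - 8 * x ^ 3 + x ^ 4 := by nlinarith [sq_nonneg (x^2 - 4*x + 8), sq_nonneg (x - 4)]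
  have hpos : (0 : ℝ) < x ^ 2 - 4 * x + 8 := by nlinarith
  have hupper : Real.sqrt (48 - 64 * x + 32 * x ^ 2 - 8 * x ^ 3 + x ^ 4) < x ^ 2 - 4 * x + 8 := by
    rw [Real.sqrt_lt' hpos]; nlinarith
  have hlower : x ^ 2 - 4 * x + 6 < Real.sqrt (48 - 64 * x + 32 * x ^ 2 - 8 * x ^ 3 + x ^ 4) := by
    rw [Real.lt_sqrt (by nlinarith)]; nlinarith
  have hD : (0 : ℝ) < 3 * (3 - 4 * x + x ^ 2) := by nlinarith
  have hD' : (0 : ℝ) < 3 * (x ^ 2 - 4 * x + 3) := by nlinarith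
  unfold w1
  rw [← hxdef]
  constructor
  · rw [div_lt_div_iff₀ hD' hD]; nlinarith
  · rw [div_lt_div_iff₀ hD (by norm_num : (0:ℝ) < 3)]; nlinarith

theorem stmt17 :
    (∀ N : ℕ, 4 ≤ N →
      0 ≤ 48 - 64 * (N : ℝ) + 32 * (N : ℝ) ^ 2 - 8 * (N : ℝ) ^ 3 + (N : ℝ) ^ 4 ∧
      3 * (3 - 4 * (N : ℝ) + (N : ℝ) ^ 2) ≠ 0 ∧
      w1 N < 2/3) ∧
    Filter.Tendsto w1 Filter.atTop (nhds (2/3)) := by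
  constructor
  · intro N hN
    have hx : (4 : ℝ) ≤ (N : ℝ) := by exact_mod_cast hN
    refine ⟨by nlinarith [sq_nonneg ((N:ℝ)^2 - 4*N + 8), sq_nonneg ((N:ℝ) - 4)],
      ne_of_gt (by nlinarith), (w1_bounds N hN).2⟩
  · -- squeeze between f and constant 2/3
    have hDlim : Filter.Tendsto (fun N : ℕ => 3 * ((N : ℝ) ^ 2 - 4 * N + 3)) Filter.atTop Filter.atTop := by
      apply Filter.tendsto_atTop_mono' _ (f₁ := fun N : ℕ => (N : ℝ))
      · filter_upwards [Filter.eventually_ge_atTop 4] with N hN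
        have hx : (4 : ℝ) ≤ (N : ℝ) := by exact_mod_cast hN
        nlinarith
      · exact tendsto_natCast_atTop_atTop
    have hflim : Filter.Tendsto (fun N : ℕ => 2 * ((N : ℝ) ^ 2 - 4 * N - 1) / (3 * ((N : ℝ) ^ 2 - 4 * N + 3)))
        Filter.atTop (nhds (2/3)) := by
      have h0 : Filter.Tendsto (fun N : ℕ => (8 : ℝ) / (3 * ((N : ℝ) ^ 2 - 4 * N + 3))) Filter.atTop (nhds 0) :=
        Filter.Tendsto.div_atTop tendsto_const_nhds hDlim
      have : Filter.Tendsto (fun N : ℕ => 2/3 - (8 : ℝ) / (3 * ((N : ℝ) ^ 2 - 4 * N + 3))) Filter.atTop (nhds (2/3 - 0)) :=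
        tendsto_const_nhds.sub h0
      rw [sub_zero] at this
      apply this.congr'
      filter_upwards [Filter.eventually_ge_atTop 4] with N hN
      have hx : (4 : ℝ) ≤ (N : ℝ) := by exact_mod_cast hN
      have hD' : (0 : ℝ) ≠ 3 * ((N : ℝ) ^ 2 - 4 * N + 3) := by nlinarith
      rw [div_sub_div _ _ (by norm_num) hD'.symm, div_eq_div_iff (mul_ne_zero (by norm_num) hD'.symm) hD'.symm]
      ring
    apply tendsto_of_tendsto_of_tendsto_of_le_of_le' hflim tendsto_const_nhds
    · filter_upwards [Filter.eventually_ge_atTop 4] with N hN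
      exact (w1_bounds N hN).1.le
    · filter_upwards [Filter.eventually_ge_atTop 4] with N hN
      exact (w1_bounds N hN).2.le
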